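/- Fix n ≥ 1. In the polynomial ring O_amb = ℤ[a_{ij}, z_j], there is the equality of ideals (z_1, f_1, ..., f_n) = (z_1, ..., z_{n+1}) ∩ (z_1, f_1, ..., f_n, Δ_1). -/
import Mathlib


open MvPolynomial

/-- The ambient polynomial ring `O_amb = ℤ[a_{ij}, z_j]`, `1 ≤ i ≤ n`, `1 ≤ j ≤ n+1`. -/
noncomputable abbrev Oamb (n : ℕ) : Type := MvPolynomial ((Fin n × Fin (n+1)) ⊕ Fin (n+1)) ℤ

/-- The generic matrix entry `a_{ij}` as an element of `O_amb`. -/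
noncomputable def av {n : ℕ} (i : Fin n) (j : Fin (n+1)) : Oamb n := X (Sum.inl (i, j))

/-- The variable `z_j` as an element of `O_amb`. -/
noncomputable def zv {n : ℕ} (j : Fin (n+1)) : Oamb n := X (Sum.inr j)

/-- The generic linear form `f_i = Σ_j a_{ij} z_j`. -/
noncomputable def fv {n : ℕ} (i : Fin n) : Oamb n := ∑ j, av i j * zv j

/-- `Δ₁`: the determinant of the `n × n` submatrix of `(a_{ij})` obtained by deleting the
first column. -/
noncomputable def Δ₁ (n : ℕ) : Oamb n := Matrix.det (Matrix.of fun i j : Fin n => av i j.succ)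

/-- The matrix of the last `n` columns. -/
noncomputable def Mmat (n : ℕ) : Matrix (Fin n) (Fin n) (Oamb n) :=
  Matrix.of fun i j : Fin n => av i j.succ

/-- The substitution killing the `z`-variables and fixing the `a`-variables. -/
noncomputable def φ (n : ℕ) : Oamb n →ₐ[ℤ] Oamb n :=
  aeval (Sum.elim (fun p => X (Sum.inl p)) (fun _ => 0))

lemma φ_zv {n : ℕ} (j : Fin (n+1)) : φ n (zv j) = 0 := by simp [φ, zv]

lemma φ_av {n : ℕ} (i : Fin n) (j : Fin (n+1)) : φ n (av i j) = av i j := by simp [φ, av]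

lemma φ_Δ₁ (n : ℕ) : φ n (Δ₁ n) = Δ₁ n := by
  rw [Δ₁, AlgHom.map_det]
  refine congrArg Matrix.det (Matrix.ext fun i j => ?_)
  simp only [AlgHom.mapMatrix_apply, Matrix.map_apply, Matrix.of_apply]
  exact φ_av i j.succ

lemma Δ₁_ne_zero (n : ℕ) : Δ₁ n ≠ 0 := by
  intro h
  have := congrArg (eval (Sum.elim
      (fun p : Fin n × Fin (n+1) => if p.2 = (p.1 : Fin n).succ then (1:ℤ) else 0)
      (fun _ => 0))) h
  rw [Δ₁, RingHom.map_det, map_zero] at this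
  have h1 : ((eval (Sum.elim (fun p : Fin n × Fin (n+1) => if p.2 = (p.1 : Fin n).succ then (1:ℤ) else 0)
      (fun _ => 0))).mapMatrix (Matrix.of fun i j : Fin n => av i j.succ)) = 1 := by
    refine Matrix.ext fun i j => ?_
    simp only [RingHom.mapMatrix_apply, Matrix.map_apply, Matrix.of_apply, av, eval_X,
      Sum.elim_inl, Fin.succ_inj, Matrix.one_apply]
    by_cases h : i = j <;> simp [h, eq_comm]
  rw [h1] at this
  simp only [Matrix.det_one] at this
  exact one_ne_zero this

lemma sub_φ_mem {n : ℕ} (p : Oamb n) :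
    p - φ n p ∈ Ideal.span (Set.range (fun j : Fin (n+1) => zv j)) := by
  set Z := Ideal.span (Set.range (fun j : Fin (n+1) => zv j))
  have hπ : (Ideal.Quotient.mkₐ ℤ Z).comp (φ n) = Ideal.Quotient.mkₐ ℤ Z := by
    apply MvPolynomial.algHom_ext
    rintro (p | j)
    · simp [φ]
    · simp only [AlgHom.comp_apply]
      rw [show (X (Sum.inr j) : Oamb n) = zv j from rfl, φ_zv, map_zero, eq_comm,
        Ideal.Quotient.mkₐ_eq_mk, Ideal.Quotient.eq_zero_iff_mem]
      exact Ideal.subset_span ⟨j, rfl⟩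
  have := congrFun (congrArg (DFunLike.coe) hπ) p
  simp only [AlgHom.comp_apply, Ideal.Quotient.mkₐ_eq_mk] at this
  rw [← Ideal.Quotient.eq_zero_iff_mem, map_sub, this, sub_self]

lemma key_cramer {n : ℕ} (j : Fin (n+1)) :
    Δ₁ n * zv j ∈ Ideal.span (insert (zv 0) (Set.range (fun i : Fin n => fv i))) := by
  set I := Ideal.span (insert (zv 0) (Set.range (fun i : Fin n => fv i))) with hI
  have hz0 : (zv 0 : Oamb n) ∈ I := Ideal.subset_span (Set.mem_insert _ _)
  induction j using Fin.cases with
  | zero => exact Ideal.mul_mem_left _ _ hz0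
  | succ k =>
    have hrow : ∀ i : Fin n, (∑ j' : Fin n, Mmat n i j' * zv j'.succ)
        = fv i - av i 0 * zv 0 := by
      intro i
      rw [fv, Fin.sum_univ_succ]
      simp [Mmat]
    have hident : (∑ i, (Matrix.adjugate (Mmat n)) k i * (fv i - av i 0 * zv 0))
        = Δ₁ n * zv k.succ := by
      calc ∑ i, (Matrix.adjugate (Mmat n)) k i * (fv i - av i 0 * zv 0)
          = ∑ i, (Matrix.adjugate (Mmat n)) k i * (∑ j' : Fin n, Mmat n i j' * zv j'.succ) := by
            simp_rw [hrow]
        _ = ∑ j' : Fin n, (∑ i, (Matrix.adjugate (Mmat n)) k i * Mmat n i j') * zv j'.succ := by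
            simp_rw [Finset.mul_sum, Finset.sum_mul]
            rw [Finset.sum_comm]
            simp_rw [mul_assoc]
        _ = ∑ j' : Fin n, ((Matrix.adjugate (Mmat n) * Mmat n) k j') * zv j'.succ := by
            simp_rw [Matrix.mul_apply]
        _ = ∑ j' : Fin n, ((Δ₁ n • (1 : Matrix (Fin n) (Fin n) (Oamb n))) k j') * zv j'.succ := by
            rw [Matrix.adjugate_mul]; rfl
        _ = Δ₁ n * zv k.succ := by
            simp_rw [Matrix.smul_apply, Matrix.one_apply, smul_ite, smul_zero, smul_eq_mul,
              mul_one, ite_mul, zero_mul]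
            rw [Finset.sum_ite_eq (Finset.univ : Finset (Fin n)) k (fun j' => Δ₁ n * zv j'.succ)]
            simp
    rw [← hident]
    refine Ideal.sum_mem _ fun i _ => Ideal.mul_mem_left _ _ ?_
    exact sub_mem (Ideal.subset_span (Set.mem_insert_iff.2 (Or.inr ⟨i, rfl⟩)))
      (Ideal.mul_mem_left _ _ hz0)

/-- The ideal equality `(z_1, f_1, …, f_n) = (z_1, …, z_{n+1}) ∩ (z_1, f_1, …, f_n, Δ₁)`
in `O_amb`. -/
theorem span_eq_inter (n : ℕ) (hn : 1 ≤ n) :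
    Ideal.span (insert (zv 0) (Set.range (fun i : Fin n => fv i)))
      = Ideal.span (Set.range (fun j : Fin (n+1) => zv j)) ⊓
        Ideal.span (insert (zv 0) (insert (Δ₁ n) (Set.range (fun i : Fin n => fv i)))) := by
  set I := Ideal.span (insert (zv 0) (Set.range (fun i : Fin n => fv i))) with hI
  set Z := Ideal.span (Set.range (fun j : Fin (n+1) => zv j)) with hZ
  have hIZ : I ≤ Z := by
    rw [hI, Ideal.span_le]
    rintro x (rfl | ⟨i, rfl⟩)
    · exact Ideal.subset_span ⟨0, rfl⟩
    · refine Ideal.sum_mem _ fun j _ => Ideal.mul_mem_left _ _ (Ideal.subset_span ⟨j, rfl⟩)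
  refine le_antisymm (le_inf hIZ (Ideal.span_mono ?_)) ?_
  · exact Set.insert_subset_insert (Set.subset_insert _ _)
  · rintro g ⟨hgZ, hgJ⟩
    rw [Set.insert_comm] at hgJ
    obtain ⟨r, z, hzI, rfl⟩ := Ideal.mem_span_insert.1 hgJ
    rw [← hI] at hzI
    have hrZ : r ∈ Z := by
      have hrd : r * Δ₁ n ∈ Z := by
        have : r * Δ₁ n = (r * Δ₁ n + z) - z := by ring
        rw [this]
        exact sub_mem hgZ (hIZ hzI)
      have hφ0 : φ n (r * Δ₁ n) = 0 := by
        have : Z ≤ RingHom.ker (φ n).toRingHom := by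
          rw [hZ, Ideal.span_le]
          rintro x ⟨j, rfl⟩
          exact φ_zv j
        exact this hrd
      rw [map_mul, φ_Δ₁] at hφ0
      have : φ n r = 0 := by
        rcases mul_eq_zero.1 hφ0 with h | h
        · exact h
        · exact absurd h (Δ₁_ne_zero n)
      have hsub := sub_φ_mem (n := n) r
      rwa [this, sub_zero] at hsub
    have : r * Δ₁ n ∈ I := by
      refine Submodule.span_induction ?_ ?_ ?_ ?_ hrZ
      · rintro x ⟨j, rfl⟩
        rw [mul_comm]
        exact key_cramer j
      · simp
      · intro x y _ _ hx hy
        rw [add_mul]; exact add_mem hx hy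
      · intro c x _ hx
        rw [smul_eq_mul, mul_assoc]
        exact Ideal.mul_mem_left _ _ hx
    exact add_mem this hzI
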